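/- Let p ≥ 1 be an integer and 0 ≤ α < 1. Define s₀(r) = 6(1-α)(1-r)⁴ − ∑_{k=1}^{p} r^{2(k-1)} (3(r+1)² − 3α(1-r)² + 2(k-1)(r²+3)(1-r)). Then s₀(0) = 3(1-α) > 0 and s₀(1) < 0, so by continuity s₀ has a root in the open interval (0,1). -/

import Mathlib

/-- The polynomial `s₀` from the radius-of-starlikeness computation satisfies
`s₀(0) = 3(1-α) > 0`, `s₀(1) < 0`, and hence has a root in `(0,1)`. -/
theorem s0_has_root (p : ℕ) (hp : 1 ≤ p) (α : ℝ) (hα0 : 0 ≤ α) (hα1 : α < 1)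
    (s₀ : ℝ → ℝ)
    (hs : ∀ r : ℝ, s₀ r = 6 * (1 - α) * (1 - r) ^ 4 -
      ∑ k ∈ Finset.Icc 1 p, r ^ (2 * (k - 1)) *
        (3 * (r + 1) ^ 2 - 3 * α * (1 - r) ^ 2 +
          2 * ((k : ℝ) - 1) * (r ^ 2 + 3) * (1 - r))) :
    s₀ 0 = 3 * (1 - α) ∧ 0 < s₀ 0 ∧ s₀ 1 < 0 ∧
      ∃ r ∈ Set.Ioo (0 : ℝ) 1, s₀ r = 0 := by
  have h0 : s₀ 0 = 3 * (1 - α) := by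
    rw [hs]
    rw [Finset.sum_eq_single 1]
    · norm_num
      ring
    · intro k hk hk1
      have hk2 : 2 ≤ k := by
        rcases Finset.mem_Icc.mp hk with ⟨h1, _⟩
        omega
      have : (0:ℝ) ^ (2 * (k - 1)) = 0 := by
        apply zero_pow
        omega
      rw [this]; ring
    · intro h
      exact absurd (Finset.mem_Icc.mpr ⟨le_refl 1, hp⟩) h
  have h1 : s₀ 1 = -(12 * p) := by
    rw [hs]
    have : ∀ k ∈ Finset.Icc 1 p, (1:ℝ) ^ (2 * (k - 1)) *
        (3 * ((1:ℝ) + 1) ^ 2 - 3 * α * (1 - 1) ^ 2 +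
          2 * ((k : ℝ) - 1) * ((1:ℝ) ^ 2 + 3) * (1 - 1)) = 12 := by
      intro k _; norm_num
    rw [Finset.sum_congr rfl this, Finset.sum_const, Nat.card_Icc]
    push_cast [Nat.sub_zero]
    ring_nf
  have hpos : 0 < s₀ 0 := by rw [h0]; nlinarith
  have hneg : s₀ 1 < 0 := by
    rw [h1]
    have : (0:ℝ) < p := by exact_mod_cast hp
    linarith
  refine ⟨h0, hpos, hneg, ?_⟩
  have hcont : ContinuousOn s₀ (Set.Icc 0 1) := by
    have : Continuous s₀ := by
      have : s₀ = fun r : ℝ => 6 * (1 - α) * (1 - r) ^ 4 -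
          ∑ k ∈ Finset.Icc 1 p, r ^ (2 * (k - 1)) *
            (3 * (r + 1) ^ 2 - 3 * α * (1 - r) ^ 2 +
              2 * ((k : ℝ) - 1) * (r ^ 2 + 3) * (1 - r)) := funext hs
      rw [this]
      apply Continuous.sub (by continuity)
      exact continuous_finset_sum _ (fun k _ => by continuity)
    exact this.continuousOn
  have := intermediate_value_Ioo' (le_of_lt one_pos) hcont
  have h0mem : (0:ℝ) ∈ Set.Ioo (s₀ 1) (s₀ 0) := ⟨hneg, hpos⟩
  obtain ⟨r, hr, hr0⟩ := this h0mem
  exact ⟨r, hr, hr0⟩
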